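/- Fix an integer g ≥ 1, let e₁,…,e_{2g+1} be pairwise distinct complex numbers, and let I₀ ⊆ {1,…,2g+1} be a g-element subset with complement J₀. For 1 ≤ k ≤ j ≤ g define P_{k,j} = (−1)^{k+j} Σ_{n=1}^{k} n · ( s_{g−k+n}(I₀)·S_{g−j−n+1}(J₀) + s_{g−j−n}(I₀)·S_{g+n−k+1}(J₀) ), and extend symmetrically by P_{j,k} = P_{k,j}. Then for every pair of distinct indices r, s ∈ I₀ one has Σ_{i=1}^{g} Σ_{j=1}^{g} P_{i,j} · e_r^{i−1} · e_s^{j−1} = F(e_r, e_s) / ( 4 (e_r − e_s)² ), where F is the Kleinian 2-polar. -/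

import Mathlib

/- STATEMENT 2: for pairwise distinct e₁,…,e_{2g+1} ∈ ℂ, a g-element subset I₀ with
   complement J₀, and the symmetric matrix P_{k,j} built from elementary symmetric
   functions of the branch points, one has, for distinct r, s ∈ I₀,
   Σ_{i,j=1}^{g} P_{i,j} e_r^{i−1} e_s^{j−1} = F(e_r,e_s)/(4(e_r−e_s)²). -/

open Finset

noncomputable section

/-- `m`-th elementary symmetric function of the numbers `{e i : i ∈ I}`, with the
convention that it vanishes for negative index `m`. -/
def esymmOn (g : ℕ) (e : Fin (2 * g + 1) → ℂ) (I : Finset (Fin (2 * g + 1))) (m : ℤ) : ℂ :=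
  if m < 0 then 0 else (I.val.map e).esymm m.toNat

/-- The coefficients λ_m defined by `4∏_{j}(x−e_j) = 4x^{2g+1} + Σ_{i=0}^{2g} λᵢ xⁱ`
(with λ_{2g+1} = 4), i.e. `λ_m = 4(−1)^{2g+1−m} σ_{2g+1−m}(e₁,…,e_{2g+1})`. -/
def lamNum (g : ℕ) (e : Fin (2 * g + 1) → ℂ) (m : ℕ) : ℂ :=
  4 * (-1) ^ (2 * g + 1 - m) *
    ((Finset.univ : Finset (Fin (2 * g + 1))).val.map e).esymm (2 * g + 1 - m)

/-- The Kleinian 2-polar `F(x,z) = Σ_{k=0}^{g} x^k z^k (2λ_{2k} + λ_{2k+1}(x+z))`. -/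
def kleinPolar (g : ℕ) (e : Fin (2 * g + 1) → ℂ) (x z : ℂ) : ℂ :=
  ∑ k ∈ Finset.range (g + 1),
    x ^ k * z ^ k * (2 * lamNum g e (2 * k) + lamNum g e (2 * k + 1) * (x + z))

/-- The quantity `P_{k,j}` for `1 ≤ k ≤ j ≤ g`, extended symmetrically
(`P_{j,k} = P_{k,j}` via taking `min` and `max` of the indices):
`P_{k,j} = (−1)^{k+j} Σ_{n=1}^{k} n (s_{g−k+n}(I₀) S_{g−j−n+1}(J₀)
  + s_{g−j−n}(I₀) S_{g+n−k+1}(J₀))`. -/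
def Pmat (g : ℕ) (e : Fin (2 * g + 1) → ℂ) (I : Finset (Fin (2 * g + 1))) (k j : ℕ) : ℂ :=
  (-1 : ℂ) ^ (k + j) *
    ∑ n ∈ Finset.Icc 1 (min k j),
      (n : ℂ) *
        (esymmOn g e I ((g : ℤ) - min k j + n) * esymmOn g e Iᶜ ((g : ℤ) - max k j - n + 1) +
          esymmOn g e I ((g : ℤ) - max k j - n) * esymmOn g e Iᶜ ((g : ℤ) + n - min k j + 1))


open Polynomial

variable {g : ℕ} {e : Fin (2 * g + 1) → ℂ} {I : Finset (Fin (2 * g + 1))}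

/-- the monic polynomial with roots `e i`, `i ∈ S`. -/
def rootPoly (g : ℕ) (e : Fin (2 * g + 1) → ℂ) (S : Finset (Fin (2 * g + 1))) : Polynomial ℂ :=
  ((S.val.map e).map fun t => X - C t).prod

lemma rootPoly_natDegree (S : Finset (Fin (2 * g + 1))) :
    (rootPoly g e S).natDegree = S.card := by
  rw [rootPoly, Polynomial.natDegree_multiset_prod_of_monic]
  · simp [Multiset.map_map]
  · intro f hf
    simp only [Multiset.mem_map] at hf
    obtain ⟨t, _, rfl⟩ := hf
    exact monic_X_sub_C t

lemma rootPoly_coeff_eq_zero (S : Finset (Fin (2 * g + 1))) {a : ℕ} (ha : S.card < a) :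
    (rootPoly g e S).coeff a = 0 :=
  Polynomial.coeff_eq_zero_of_natDegree_lt (by rw [rootPoly_natDegree]; exact ha)

/-- Vieta: esymm in terms of coefficients. -/
lemma esymm_eq_coeff (S : Finset (Fin (2 * g + 1))) {m : ℕ} (hm : m ≤ S.card) :
    (S.val.map e).esymm m = (-1 : ℂ) ^ m * (rootPoly g e S).coeff (S.card - m) := by
  have hcard : Multiset.card (S.val.map e) = S.card := by simp
  have h : S.card - m ≤ Multiset.card (S.val.map e) := by omega
  rw [rootPoly, Multiset.prod_X_sub_C_coeff _ h, hcard]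
  have h2 : S.card - (S.card - m) = m := by omega
  rw [h2, ← mul_assoc, ← pow_add]
  have h3 : Even (m + m) := by exact ⟨m, by ring⟩
  rw [h3.neg_one_pow, one_mul]

lemma rootPoly_eval (S : Finset (Fin (2 * g + 1))) (x : ℂ) :
    (rootPoly g e S).eval x = ∏ i ∈ S, (x - e i) := by
  rw [rootPoly, Multiset.map_map, eval_multiset_prod]
  rw [Finset.prod, Multiset.map_map]
  simp

lemma rootPoly_mul_compl (I : Finset (Fin (2 * g + 1))) :
    rootPoly g e I * rootPoly g e Iᶜ = rootPoly g e univ := by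
  have h1 : ∀ S : Finset (Fin (2 * g + 1)), rootPoly g e S = ∏ i ∈ S, (X - C (e i)) := by
    intro S; rw [rootPoly, Multiset.map_map, Finset.prod]; rfl
  rw [h1, h1, h1, Finset.prod_mul_prod_compl]

lemma esymmOn_coe (S : Finset (Fin (2 * g + 1))) (m : ℕ) :
    esymmOn g e S (m : ℤ) = (S.val.map e).esymm m := by
  simp [esymmOn]

lemma card_compl_eq (hI : I.card = g) : Iᶜ.card = g + 1 := by
  rw [Finset.card_compl, hI]
  simp; omega

lemma Pmat_eq (hI : I.card = g) {k j : ℕ} (hk : k ∈ Icc 1 g) (hj : j ∈ Icc 1 g) :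
    Pmat g e I k j =
      -∑ n ∈ Icc 1 (min k j), (n : ℂ) *
        ((rootPoly g e I).coeff (min k j - n) * (rootPoly g e Iᶜ).coeff (max k j + n) +
         (rootPoly g e I).coeff (max k j + n) * (rootPoly g e Iᶜ).coeff (min k j - n)) := by
  simp only [mem_Icc] at hk hj
  have hIc : Iᶜ.card = g + 1 := card_compl_eq hI
  rw [Pmat, Finset.mul_sum, ← Finset.sum_neg_distrib]
  refine Finset.sum_congr rfl fun n hn => ?_
  simp only [mem_Icc] at hn
  set mn := min k j with hmn
  set mx := max k j with hmx
  have hb1 : 1 ≤ n ∧ n ≤ mn ∧ mn ≤ mx ∧ mx ≤ g ∧ mn + mx = k + j := by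
    constructor; exact hn.1
    refine ⟨hn.2, min_le_max, ?_, min_add_max k j⟩
    simp [hmx]; omega
  obtain ⟨h1n, hnmn, hmnmx, hmxg, hsum⟩ := hb1
  -- first product
  have c1 : (-1 : ℂ) ^ (k + j) *
      (esymmOn g e I ((g : ℤ) - mn + n) * esymmOn g e Iᶜ ((g : ℤ) - mx - n + 1)) =
      -((rootPoly g e I).coeff (mn - n) * (rootPoly g e Iᶜ).coeff (mx + n)) := by
    have e1 : ((g : ℤ) - mn + n) = ((g - (mn - n) : ℕ) : ℤ) := by push_cast; omega
    have h1 : esymmOn g e I ((g : ℤ) - mn + n) =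
        (-1 : ℂ) ^ (g - (mn - n)) * (rootPoly g e I).coeff (mn - n) := by
      rw [e1, esymmOn_coe, esymm_eq_coeff I (by rw [hI]; omega), hI]
      congr 2
      omega
    by_cases hb : mx + n ≤ g + 1
    · have e2 : ((g : ℤ) - mx - n + 1) = ((g + 1 - (mx + n) : ℕ) : ℤ) := by push_cast; omega
      have h2 : esymmOn g e Iᶜ ((g : ℤ) - mx - n + 1) =
          (-1 : ℂ) ^ (g + 1 - (mx + n)) * (rootPoly g e Iᶜ).coeff (mx + n) := by
        rw [e2, esymmOn_coe, esymm_eq_coeff Iᶜ (by rw [hIc]; omega), hIc]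
        congr 2
        omega
      rw [h1, h2]
      have hodd : (-1 : ℂ) ^ (k + j + ((g - (mn - n)) + (g + 1 - (mx + n)))) = -1 := by
        have : k + j + ((g - (mn - n)) + (g + 1 - (mx + n))) = 2 * g + 1 := by omega
        rw [this]
        exact Odd.neg_one_pow ⟨g, by ring⟩
      calc (-1 : ℂ) ^ (k + j) * ((-1) ^ (g - (mn - n)) * (rootPoly g e I).coeff (mn - n) *
              ((-1) ^ (g + 1 - (mx + n)) * (rootPoly g e Iᶜ).coeff (mx + n)))
          = (-1 : ℂ) ^ (k + j + ((g - (mn - n)) + (g + 1 - (mx + n)))) *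
              ((rootPoly g e I).coeff (mn - n) * (rootPoly g e Iᶜ).coeff (mx + n)) := by
            rw [pow_add, pow_add]; ring
        _ = -((rootPoly g e I).coeff (mn - n) * (rootPoly g e Iᶜ).coeff (mx + n)) := by
            rw [hodd]; ring
    · have h2 : esymmOn g e Iᶜ ((g : ℤ) - mx - n + 1) = 0 := by
        rw [esymmOn, if_pos (by omega)]
      have h3 : (rootPoly g e Iᶜ).coeff (mx + n) = 0 :=
        rootPoly_coeff_eq_zero Iᶜ (by omega)
      rw [h2, h3]; ring
  -- second product
  have c2 : (-1 : ℂ) ^ (k + j) *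
      (esymmOn g e I ((g : ℤ) - mx - n) * esymmOn g e Iᶜ ((g : ℤ) + n - mn + 1)) =
      -((rootPoly g e I).coeff (mx + n) * (rootPoly g e Iᶜ).coeff (mn - n)) := by
    have e2 : ((g : ℤ) + n - mn + 1) = ((g + 1 - (mn - n) : ℕ) : ℤ) := by push_cast; omega
    have h2 : esymmOn g e Iᶜ ((g : ℤ) + n - mn + 1) =
        (-1 : ℂ) ^ (g + 1 - (mn - n)) * (rootPoly g e Iᶜ).coeff (mn - n) := by
      rw [e2, esymmOn_coe, esymm_eq_coeff Iᶜ (by rw [hIc]; omega), hIc]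
      congr 2
      omega
    by_cases hb : mx + n ≤ g
    · have e1 : ((g : ℤ) - mx - n) = ((g - (mx + n) : ℕ) : ℤ) := by push_cast; omega
      have h1 : esymmOn g e I ((g : ℤ) - mx - n) =
          (-1 : ℂ) ^ (g - (mx + n)) * (rootPoly g e I).coeff (mx + n) := by
        rw [e1, esymmOn_coe, esymm_eq_coeff I (by rw [hI]; omega), hI]
        congr 2
        omega
      rw [h1, h2]
      have hodd : (-1 : ℂ) ^ (k + j + ((g - (mx + n)) + (g + 1 - (mn - n)))) = -1 := by
        have : k + j + ((g - (mx + n)) + (g + 1 - (mn - n))) = 2 * g + 1 := by omega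
        rw [this]
        exact Odd.neg_one_pow ⟨g, by ring⟩
      calc (-1 : ℂ) ^ (k + j) * ((-1) ^ (g - (mx + n)) * (rootPoly g e I).coeff (mx + n) *
              ((-1) ^ (g + 1 - (mn - n)) * (rootPoly g e Iᶜ).coeff (mn - n)))
          = (-1 : ℂ) ^ (k + j + ((g - (mx + n)) + (g + 1 - (mn - n)))) *
              ((rootPoly g e I).coeff (mx + n) * (rootPoly g e Iᶜ).coeff (mn - n)) := by
            rw [pow_add, pow_add]; ring
        _ = _ := by rw [hodd]; ring
    · have h1 : esymmOn g e I ((g : ℤ) - mx - n) = 0 := by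
        rw [esymmOn, if_pos (by omega)]
      have h3 : (rootPoly g e I).coeff (mx + n) = 0 :=
        rootPoly_coeff_eq_zero I (by rw [hI]; omega)
      rw [h1, h3]; ring
  linear_combination (n : ℂ) * c1 + (n : ℂ) * c2

/-- Auxiliary kernel for the quadratic form. -/
def Wf (g : ℕ) (x z : ℂ) (a b : ℕ) : ℂ :=
  ∑ n ∈ Icc 1 g,
    ((if a + 2*n ≤ b ∧ a + n ≤ g ∧ b ≤ g + n then (n:ℂ) * (x^(a+n-1) * z^(b-n-1)) else 0) +
     (if b + 2*n ≤ a ∧ b + n ≤ g ∧ a ≤ g + n then (n:ℂ) * (x^(b+n-1) * z^(a-n-1)) else 0) +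
     (if a + 2*n + 1 ≤ b ∧ a + n ≤ g ∧ b ≤ g + n then (n:ℂ) * (x^(b-n-1) * z^(a+n-1)) else 0) +
     (if b + 2*n + 1 ≤ a ∧ b + n ≤ g ∧ a ≤ g + n then (n:ℂ) * (x^(a-n-1) * z^(b+n-1)) else 0))

/-- One-sided version (`a ≤ b`, `d = b - a`). -/
def Wg (g : ℕ) (x z : ℂ) (a d : ℕ) : ℂ :=
  ∑ n ∈ Icc 1 g,
    ((if 2*n ≤ d then (n:ℂ) * (x^(a+n-1) * z^(a+d-n-1)) else 0) +
     (if 2*n + 1 ≤ d then (n:ℂ) * (x^(a+d-n-1) * z^(a+n-1)) else 0))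

/-- even/odd building block of the Kleinian 2-polar. -/
def Phi (x z : ℂ) (m : ℕ) : ℂ :=
  if m % 2 = 0 then 8*(x*z)^(m/2) else 4*(x*z)^(m/2)*(x+z)

lemma Wf_comm (g : ℕ) (x z : ℂ) (a b : ℕ) : Wf g x z a b = Wf g x z b a := by
  refine Finset.sum_congr rfl fun n _ => ?_
  ring

lemma Wf_eq_Wg (g : ℕ) (x z : ℂ) {a b : ℕ} (hab : a ≤ b) (hag : a ≤ g) (hbg : b ≤ g + 1) :
    Wf g x z a b = Wg g x z a (b - a) := by
  refine Finset.sum_congr rfl fun n hn => ?_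
  simp only [mem_Icc] at hn
  have h2 : ¬ (b + 2*n ≤ a ∧ b + n ≤ g ∧ a ≤ g + n) := by omega
  have h4 : ¬ (b + 2*n + 1 ≤ a ∧ b + n ≤ g ∧ a ≤ g + n) := by omega
  rw [if_neg h2, if_neg h4, add_zero, add_zero]
  have c1 : (a + 2*n ≤ b ∧ a + n ≤ g ∧ b ≤ g + n) ↔ (2*n ≤ b - a) := by omega
  have c3 : (a + 2*n + 1 ≤ b ∧ a + n ≤ g ∧ b ≤ g + n) ↔ (2*n + 1 ≤ b - a) := by omega
  have ez : b - n - 1 = a + (b-a) - n - 1 := by omega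
  have ex : b - n - 1 = a + (b-a) - n - 1 := by omega
  rw [if_congr c1 rfl rfl, if_congr c3 rfl rfl, ez]

/-- shift-the-weight helper. -/
lemma shift_weight (g : ℕ) (C : ℕ → Prop) [DecidablePred C] (K : ℕ → ℂ)
    (htop : ¬ C (g+1)) :
    ∑ m ∈ Icc 1 g, (if C m then ((m:ℂ)-1) * K m else 0)
      = ∑ m ∈ Icc 1 g, (if C (m+1) then (m:ℂ) * K (m+1) else 0) := by
  have h1 : ∑ m ∈ Icc 1 g, (if C m then ((m:ℂ)-1) * K m else 0)
      = ∑ m ∈ Icc 1 (g+1), (if C m then ((m:ℂ)-1) * K m else 0) := by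
    rw [Finset.sum_Icc_succ_top (by omega), if_neg htop, add_zero]
  have h2 : Finset.Icc 1 (g+1) = insert 1 (Finset.Icc 2 (g+1)) := by
    ext m; simp [Finset.mem_Icc, Finset.mem_insert]; omega
  rw [h1, h2, Finset.sum_insert (by simp)]
  simp only [Nat.cast_one, sub_self, zero_mul, ite_self, zero_add]
  refine (Finset.sum_nbij' (fun m => m + 1) (fun m => m - 1) ?_ ?_ ?_ ?_ ?_).symm
  · intro m hm; simp only [mem_Icc] at *; (try dsimp only); omega
  · intro m hm; simp only [mem_Icc] at *; (try dsimp only); omega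
  · intro m hm; simp only [mem_Icc] at hm; (try dsimp only); omega
  · intro m hm; simp only [mem_Icc] at hm; (try dsimp only); omega
  · intro m hm
    simp only [mem_Icc] at hm
    have h5 : ((m + 1 : ℕ) : ℂ) - 1 = (m : ℂ) := by push_cast; ring
    rw [h5]

/-- recurrence for `Wg`. -/
lemma Wg_rec (g : ℕ) (x z : ℂ) (a n : ℕ) (hd : n + 2 ≤ g + 1) :
    Wg g x z a (n+2) = Wg g x z (a+1) n + ∑ i ∈ range (n+1), x^(a+i) * z^(a+n-i) := by
  rw [Wg, Wg, Finset.sum_add_distrib, Finset.sum_add_distrib]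
  -- piece A
  have hA : ∑ m ∈ Icc 1 g, (if 2*m ≤ n+2 then (m:ℂ) * (x^(a+m-1) * z^(a+(n+2)-m-1)) else 0)
      = (∑ m ∈ Icc 1 g, (if 2*m ≤ n then (m:ℂ) * (x^(a+1+m-1) * z^(a+1+n-m-1)) else 0))
        + ∑ i ∈ range ((n+2)/2), x^(a+i) * z^(a+n-i) := by
    have e1 : ∑ m ∈ Icc 1 g, (if 2*m ≤ n then (m:ℂ) * (x^(a+1+m-1) * z^(a+1+n-m-1)) else 0)
        = ∑ m ∈ Icc 1 g, (if 2*m ≤ n+2 then ((m:ℂ)-1) * (x^(a+m-1) * z^(a+(n+2)-m-1)) else 0) := by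
      rw [shift_weight g (fun m => 2*m ≤ n+2) (fun m => x^(a+m-1) * z^(a+(n+2)-m-1))
        (by omega)]
      refine Finset.sum_congr rfl fun m hm => ?_
      simp only [mem_Icc] at hm
      have c : (2*(m+1) ≤ n+2) ↔ (2*m ≤ n) := by omega
      have e2 : a + (m+1) - 1 = a + 1 + m - 1 := by omega
      have e3 : a + (n+2) - (m+1) - 1 = a + 1 + n - m - 1 := by omega
      rw [if_congr c rfl rfl, e2, e3]
    rw [e1]
    have e4 : ∑ m ∈ Icc 1 g, (if 2*m ≤ n+2 then (m:ℂ) * (x^(a+m-1) * z^(a+(n+2)-m-1)) else 0)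
        = (∑ m ∈ Icc 1 g, (if 2*m ≤ n+2 then ((m:ℂ)-1) * (x^(a+m-1) * z^(a+(n+2)-m-1)) else 0))
          + ∑ m ∈ Icc 1 g, (if 2*m ≤ n+2 then x^(a+m-1) * z^(a+(n+2)-m-1) else 0) := by
      rw [← Finset.sum_add_distrib]
      refine Finset.sum_congr rfl fun m _ => ?_
      split <;> ring
    rw [e4]
    congr 1
    -- remaining: indicator sum = range sum
    have e5 : ∑ m ∈ Icc 1 g, (if 2*m ≤ n+2 then x^(a+m-1) * z^(a+(n+2)-m-1) else 0)
        = ∑ m ∈ Icc 1 ((n+2)/2), x^(a+m-1) * z^(a+(n+2)-m-1) := by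
      rw [← Finset.sum_filter]
      apply Finset.sum_congr _ (fun _ _ => rfl)
      ext m; simp only [Finset.mem_filter, mem_Icc]; omega
    rw [e5]
    refine Finset.sum_nbij' (fun m => m - 1) (fun i => i + 1) ?_ ?_ ?_ ?_ ?_
    · intro m hm; simp only [mem_Icc, mem_range] at *; (try dsimp only); omega
    · intro i hi; simp only [mem_Icc, mem_range] at *; (try dsimp only); omega
    · intro m hm; simp only [mem_Icc] at hm; (try dsimp only); omega
    · intro i hi; simp only [mem_range] at hi; (try dsimp only); omega
    · intro m hm
      simp only [mem_Icc] at hm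
      have e6 : a + (m-1) = a + m - 1 := by omega
      have e7 : a + n - (m-1) = a + (n+2) - m - 1 := by omega
      rw [e6, e7]
  -- piece B
  have hB : ∑ m ∈ Icc 1 g, (if 2*m+1 ≤ n+2 then (m:ℂ) * (x^(a+(n+2)-m-1) * z^(a+m-1)) else 0)
      = (∑ m ∈ Icc 1 g, (if 2*m+1 ≤ n then (m:ℂ) * (x^(a+1+n-m-1) * z^(a+1+m-1)) else 0))
        + ∑ i ∈ Icc ((n+2)/2) n, x^(a+i) * z^(a+n-i) := by
    have e1 : ∑ m ∈ Icc 1 g, (if 2*m+1 ≤ n then (m:ℂ) * (x^(a+1+n-m-1) * z^(a+1+m-1)) else 0)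
        = ∑ m ∈ Icc 1 g, (if 2*m+1 ≤ n+2 then ((m:ℂ)-1) * (x^(a+(n+2)-m-1) * z^(a+m-1)) else 0) := by
      rw [shift_weight g (fun m => 2*m+1 ≤ n+2) (fun m => x^(a+(n+2)-m-1) * z^(a+m-1))
        (by omega)]
      refine Finset.sum_congr rfl fun m hm => ?_
      simp only [mem_Icc] at hm
      have c : (2*(m+1)+1 ≤ n+2) ↔ (2*m+1 ≤ n) := by omega
      have e2 : a + (n+2) - (m+1) - 1 = a + 1 + n - m - 1 := by omega
      have e3 : a + (m+1) - 1 = a + 1 + m - 1 := by omega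
      rw [if_congr c rfl rfl, e2, e3]
    rw [e1]
    have e4 : ∑ m ∈ Icc 1 g, (if 2*m+1 ≤ n+2 then (m:ℂ) * (x^(a+(n+2)-m-1) * z^(a+m-1)) else 0)
        = (∑ m ∈ Icc 1 g, (if 2*m+1 ≤ n+2 then ((m:ℂ)-1) * (x^(a+(n+2)-m-1) * z^(a+m-1)) else 0))
          + ∑ m ∈ Icc 1 g, (if 2*m+1 ≤ n+2 then x^(a+(n+2)-m-1) * z^(a+m-1) else 0) := by
      rw [← Finset.sum_add_distrib]
      refine Finset.sum_congr rfl fun m _ => ?_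
      split <;> ring
    rw [e4]
    congr 1
    have e5 : ∑ m ∈ Icc 1 g, (if 2*m+1 ≤ n+2 then x^(a+(n+2)-m-1) * z^(a+m-1) else 0)
        = ∑ m ∈ Icc 1 ((n+1)/2), x^(a+(n+2)-m-1) * z^(a+m-1) := by
      rw [← Finset.sum_filter]
      apply Finset.sum_congr _ (fun _ _ => rfl)
      ext m; simp only [Finset.mem_filter, mem_Icc]; omega
    rw [e5]
    refine Finset.sum_nbij' (fun m => n + 1 - m) (fun i => n + 1 - i) ?_ ?_ ?_ ?_ ?_
    · intro m hm; simp only [mem_Icc] at *; (try dsimp only); omega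
    · intro i hi; simp only [mem_Icc] at *; (try dsimp only); omega
    · intro m hm; simp only [mem_Icc] at hm; (try dsimp only); omega
    · intro i hi; simp only [mem_Icc] at hi; (try dsimp only); omega
    · intro m hm
      simp only [mem_Icc] at hm
      have e6 : a + (n + 1 - m) = a + (n+2) - m - 1 := by omega
      have e7 : a + n - (n + 1 - m) = a + m - 1 := by omega
      rw [e6, e7]
  rw [hA, hB]
  have hsplit : ∑ i ∈ range (n+1), x^(a+i) * z^(a+n-i)
      = (∑ i ∈ range ((n+2)/2), x^(a+i) * z^(a+n-i))
        + ∑ i ∈ Icc ((n+2)/2) n, x^(a+i) * z^(a+n-i) := by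
    rw [← Finset.Ico_add_one_right_eq_Icc, ← Finset.sum_range_add_sum_Ico _ (by omega : (n+2)/2 ≤ n+1)]
  rw [hsplit]
  ring

lemma tent (g : ℕ) (x z : ℂ) :
    ∀ d a : ℕ, a + d ≤ g + 1 →
      4*(x-z)^2 * Wg g x z a d = 4*(x^a*z^(a+d) + x^(a+d)*z^a) - Phi x z (2*a+d) := by
  intro d
  induction d using Nat.twoStepInduction with
  | zero =>
    intro a _
    have h0 : Wg g x z a 0 = 0 := by
      rw [Wg]
      apply Finset.sum_eq_zero
      intro n hn
      simp only [mem_Icc] at hn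
      rw [if_neg (by omega), if_neg (by omega)]
      simp
    rw [h0, Phi, if_pos (by omega)]
    have h2 : (2*a+0)/2 = a := by omega
    rw [h2]
    ring
  | one =>
    intro a _
    have h0 : Wg g x z a 1 = 0 := by
      rw [Wg]
      apply Finset.sum_eq_zero
      intro n hn
      simp only [mem_Icc] at hn
      rw [if_neg (by omega), if_neg (by omega)]
      simp
    rw [h0, Phi, if_neg (by omega)]
    have h2 : (2*a+1)/2 = a := by omega
    rw [h2]
    ring
  | more n ih _ =>
    intro a h
    rw [Wg_rec g x z a n (by omega), mul_add]
    have hih := ih (a+1) (by omega)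
    rw [hih]
    have hphi : 2*(a+1)+n = 2*a+(n+2) := by omega
    rw [hphi]
    have hgeo : (∑ i ∈ range (n+1), x^(a+i) * z^(a+n-i))
        = x^a*z^a * ∑ i ∈ range (n+1), x^i*z^(n-i) := by
      rw [Finset.mul_sum]
      refine Finset.sum_congr rfl fun i hi => ?_
      simp only [mem_range] at hi
      have e1 : a + n - i = a + (n-i) := by omega
      rw [e1, pow_add, pow_add]
      ring
    rw [hgeo]
    have hgs : (∑ i ∈ range (n+1), x^i*z^(n-i)) * (x - z) = x^(n+1) - z^(n+1) := by
      have := geom_sum₂_mul x z (n+1)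
      simpa using this
    linear_combination (4*(x-z)*x^a*z^a) * hgs

lemma tent' (g : ℕ) (x z : ℂ) {a b : ℕ} (ha : a ≤ g) (hb : b ≤ g+1) :
    Phi x z (a+b) = 4*(x^a*z^b + x^b*z^a) - 4*(x-z)^2 * Wf g x z a b := by
  rcases le_total a b with hab | hab
  · rw [Wf_eq_Wg g x z hab ha hb]
    have ht := tent g x z (b-a) a (by omega)
    rw [show a+(b-a) = b from by omega, show 2*a+(b-a) = a+b from by omega] at ht
    linear_combination ht
  · rw [Wf_comm, Wf_eq_Wg g x z hab (by omega) (by omega)]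
    have ht := tent g x z (a-b) b (by omega)
    rw [show b+(a-b) = a from by omega, show 2*b+(a-b) = a+b from by omega] at ht
    linear_combination ht

lemma cube_reindex (g t : ℕ) (F : ℕ → ℕ → ℕ → ℂ) :
    (∑ k ∈ Icc 1 g, ∑ j ∈ Icc 1 g, ∑ n ∈ Icc 1 g,
      if n ≤ k ∧ k + t ≤ j then F (k-n) (j+n) n else 0)
    = ∑ a ∈ range (3*g+3), ∑ b ∈ range (3*g+3), ∑ n ∈ Icc 1 g,
      if a + 2*n + t ≤ b ∧ a + n ≤ g ∧ b ≤ g + n then F a b n else 0 := by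
  have L : (∑ k ∈ Icc 1 g, ∑ j ∈ Icc 1 g, ∑ n ∈ Icc 1 g,
        if n ≤ k ∧ k + t ≤ j then F (k-n) (j+n) n else 0)
      = ∑ q ∈ (((Icc 1 g) ×ˢ (Icc 1 g)) ×ˢ (Icc 1 g)).filter
          (fun q => q.2 ≤ q.1.1 ∧ q.1.1 + t ≤ q.1.2),
          F (q.1.1 - q.2) (q.1.2 + q.2) q.2 := by
    rw [Finset.sum_filter, Finset.sum_product, Finset.sum_product]
  have R : (∑ a ∈ range (3*g+3), ∑ b ∈ range (3*g+3), ∑ n ∈ Icc 1 g,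
        if a + 2*n + t ≤ b ∧ a + n ≤ g ∧ b ≤ g + n then F a b n else 0)
      = ∑ q ∈ (((range (3*g+3)) ×ˢ (range (3*g+3))) ×ˢ (Icc 1 g)).filter
          (fun q => q.1.1 + 2*q.2 + t ≤ q.1.2 ∧ q.1.1 + q.2 ≤ g ∧ q.1.2 ≤ g + q.2),
          F q.1.1 q.1.2 q.2 := by
    rw [Finset.sum_filter, Finset.sum_product, Finset.sum_product]
  rw [L, R]
  refine Finset.sum_nbij' (fun q => ((q.1.1 - q.2, q.1.2 + q.2), q.2))
    (fun q => ((q.1.1 + q.2, q.1.2 - q.2), q.2)) ?_ ?_ ?_ ?_ ?_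
  · rintro ⟨⟨k, j⟩, n⟩ hq
    simp only [Finset.mem_filter, Finset.mem_product, mem_Icc, mem_range] at hq ⊢
    omega
  · rintro ⟨⟨a, b⟩, n⟩ hq
    simp only [Finset.mem_filter, Finset.mem_product, mem_Icc, mem_range] at hq ⊢
    omega
  · rintro ⟨⟨k, j⟩, n⟩ hq
    simp only [Finset.mem_filter, Finset.mem_product, mem_Icc, mem_range] at hq
    simp only [Prod.mk.injEq]
    refine ⟨⟨?_, ?_⟩, trivial⟩ <;> omega
  · rintro ⟨⟨a, b⟩, n⟩ hq
    simp only [Finset.mem_filter, Finset.mem_product, mem_Icc, mem_range] at hq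
    simp only [Prod.mk.injEq]
    refine ⟨⟨?_, ?_⟩, trivial⟩ <;> omega
  · rintro ⟨⟨k, j⟩, n⟩ _
    rfl

lemma sumL (g : ℕ) (x z : ℂ) (u v : ℕ → ℂ) :
    (∑ k ∈ Icc 1 g, ∑ j ∈ Icc 1 g,
      (-∑ n ∈ Icc 1 (min k j), (n:ℂ) *
          (u (min k j - n) * v (max k j + n) + u (max k j + n) * v (min k j - n)))
        * x^(k-1) * z^(j-1))
    = -∑ a ∈ range (3*g+3), ∑ b ∈ range (3*g+3), u a * v b * Wf g x z a b := by
  set F1 : ℕ → ℕ → ℕ → ℂ := fun a b n => u a * v b * ((n:ℂ) * (x^(a+n-1) * z^(b-n-1))) with hF1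
  set F2 : ℕ → ℕ → ℕ → ℂ := fun a b n => u b * v a * ((n:ℂ) * (x^(a+n-1) * z^(b-n-1))) with hF2
  set F3 : ℕ → ℕ → ℕ → ℂ := fun a b n => u a * v b * ((n:ℂ) * (x^(b-n-1) * z^(a+n-1))) with hF3
  set F4 : ℕ → ℕ → ℕ → ℂ := fun a b n => u b * v a * ((n:ℂ) * (x^(b-n-1) * z^(a+n-1))) with hF4
  have step1 : (∑ k ∈ Icc 1 g, ∑ j ∈ Icc 1 g,
      (-∑ n ∈ Icc 1 (min k j), (n:ℂ) *
          (u (min k j - n) * v (max k j + n) + u (max k j + n) * v (min k j - n)))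
        * x^(k-1) * z^(j-1))
      = -(∑ k ∈ Icc 1 g, ∑ j ∈ Icc 1 g, ∑ n ∈ Icc 1 g,
           ((if n ≤ k ∧ k + 0 ≤ j then F1 (k-n) (j+n) n else 0)
         + ((if n ≤ k ∧ k + 0 ≤ j then F2 (k-n) (j+n) n else 0)
         + ((if n ≤ j ∧ j + 1 ≤ k then F3 (j-n) (k+n) n else 0)
         + (if n ≤ j ∧ j + 1 ≤ k then F4 (j-n) (k+n) n else 0))))) := by
    rw [← Finset.sum_neg_distrib]
    refine Finset.sum_congr rfl fun k hk => ?_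
    rw [← Finset.sum_neg_distrib]
    refine Finset.sum_congr rfl fun j hj => ?_
    simp only [mem_Icc] at hk hj
    rw [neg_mul, neg_mul, neg_inj]
    have e1 : (∑ n ∈ Icc 1 (min k j), (n:ℂ) *
          (u (min k j - n) * v (max k j + n) + u (max k j + n) * v (min k j - n)))
        = ∑ n ∈ Icc 1 g, if n ≤ min k j then (n:ℂ) *
          (u (min k j - n) * v (max k j + n) + u (max k j + n) * v (min k j - n)) else 0 := by
      rw [← Finset.sum_filter]
      apply Finset.sum_congr _ (fun _ _ => rfl)
      ext m; simp only [Finset.mem_filter, mem_Icc]; omega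
    rw [e1, Finset.sum_mul, Finset.sum_mul]
    refine Finset.sum_congr rfl fun n hn => ?_
    simp only [mem_Icc] at hn
    simp only [ite_mul, zero_mul]
    rcases le_or_gt k j with h | h
    · simp only [min_eq_left h, max_eq_right h]
      by_cases hcn : n ≤ k
      · rw [if_pos hcn, if_pos ⟨hcn, by omega⟩, if_pos ⟨hcn, by omega⟩,
          if_neg (by omega), if_neg (by omega)]
        simp only [hF1, hF2]
        have ex : k - n + n - 1 = k - 1 := by omega
        have ez : j + n - n - 1 = j - 1 := by omega
        rw [ex, ez]
        ring
      · rw [if_neg hcn, if_neg (by omega), if_neg (by omega),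
          if_neg (by omega), if_neg (by omega)]
        simp
    · simp only [min_eq_right h.le, max_eq_left h.le]
      by_cases hcn : n ≤ j
      · rw [if_pos hcn, if_neg (by omega), if_neg (by omega),
          if_pos ⟨hcn, by omega⟩, if_pos ⟨hcn, by omega⟩]
        simp only [hF3, hF4]
        have ex : k + n - n - 1 = k - 1 := by omega
        have ez : j - n + n - 1 = j - 1 := by omega
        rw [ex, ez]
        ring
      · rw [if_neg hcn, if_neg (by omega), if_neg (by omega),
          if_neg (by omega), if_neg (by omega)]
        simp
  rw [step1]
  simp only [Finset.sum_add_distrib]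
  have sw3 : (∑ k ∈ Icc 1 g, ∑ j ∈ Icc 1 g, ∑ n ∈ Icc 1 g,
        if n ≤ j ∧ j + 1 ≤ k then F3 (j-n) (k+n) n else 0)
      = ∑ k ∈ Icc 1 g, ∑ j ∈ Icc 1 g, ∑ n ∈ Icc 1 g,
        if n ≤ k ∧ k + 1 ≤ j then F3 (k-n) (j+n) n else 0 := Finset.sum_comm
  have sw4 : (∑ k ∈ Icc 1 g, ∑ j ∈ Icc 1 g, ∑ n ∈ Icc 1 g,
        if n ≤ j ∧ j + 1 ≤ k then F4 (j-n) (k+n) n else 0)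
      = ∑ k ∈ Icc 1 g, ∑ j ∈ Icc 1 g, ∑ n ∈ Icc 1 g,
        if n ≤ k ∧ k + 1 ≤ j then F4 (k-n) (j+n) n else 0 := Finset.sum_comm
  rw [sw3, sw4, cube_reindex g 0 F1, cube_reindex g 0 F2, cube_reindex g 1 F3,
    cube_reindex g 1 F4]
  have sw2 : (∑ a ∈ range (3*g+3), ∑ b ∈ range (3*g+3), ∑ n ∈ Icc 1 g,
        if a + 2*n + 0 ≤ b ∧ a + n ≤ g ∧ b ≤ g + n then F2 a b n else 0)
      = ∑ a ∈ range (3*g+3), ∑ b ∈ range (3*g+3), ∑ n ∈ Icc 1 g,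
        if b + 2*n + 0 ≤ a ∧ b + n ≤ g ∧ a ≤ g + n then F2 b a n else 0 := Finset.sum_comm
  have sw4' : (∑ a ∈ range (3*g+3), ∑ b ∈ range (3*g+3), ∑ n ∈ Icc 1 g,
        if a + 2*n + 1 ≤ b ∧ a + n ≤ g ∧ b ≤ g + n then F4 a b n else 0)
      = ∑ a ∈ range (3*g+3), ∑ b ∈ range (3*g+3), ∑ n ∈ Icc 1 g,
        if b + 2*n + 1 ≤ a ∧ b + n ≤ g ∧ a ≤ g + n then F4 b a n else 0 := Finset.sum_comm
  rw [sw2, sw4']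
  congr 1
  simp only [← Finset.sum_add_distrib]
  refine Finset.sum_congr rfl fun a ha => Finset.sum_congr rfl fun b hb => ?_
  rw [Wf, Finset.mul_sum]
  refine Finset.sum_congr rfl fun n hn => ?_
  simp only [hF1, hF2, hF3, hF4, mul_add, mul_ite, mul_zero, add_zero]
  ring

lemma sum_range_even_odd (N : ℕ) (h : ℕ → ℂ) :
    ∑ m ∈ range (2*N), h m = ∑ k ∈ range N, (h (2*k) + h (2*k+1)) := by
  induction N with
  | zero => simp
  | succ N ih =>
    have e : 2*(N+1) = (2*N+1)+1 := by ring
    rw [e, Finset.sum_range_succ, Finset.sum_range_succ, Finset.sum_range_succ, ih]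
    ring

lemma box_antidiag (B N : ℕ) (f : ℕ → ℕ → ℂ) (hB : N ≤ B)
    (hf : ∀ a b, f a b ≠ 0 → a + b < N) :
    ∑ a ∈ range B, ∑ b ∈ range B, f a b
      = ∑ m ∈ range N, ∑ p ∈ Finset.HasAntidiagonal.antidiagonal m, f p.1 p.2 := by
  rw [← Finset.sum_product']
  have h1 : ∑ p ∈ (range B) ×ˢ (range B), f p.1 p.2
      = ∑ p ∈ ((range B) ×ˢ (range B)).filter (fun p => p.1 + p.2 < N), f p.1 p.2 :=
    (Finset.sum_filter_of_ne (fun p _ hp => hf p.1 p.2 hp)).symm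
  have h2 : (∑ m ∈ range N, ∑ p ∈ Finset.HasAntidiagonal.antidiagonal m, f p.1 p.2)
      = ∑ q ∈ (range N).sigma (fun m => Finset.HasAntidiagonal.antidiagonal m),
          f q.2.1 q.2.2 :=
    (Finset.sum_sigma (range N) (fun m => Finset.HasAntidiagonal.antidiagonal m)
      (fun q => f q.2.1 q.2.2)).symm
  rw [h1, h2]
  refine Finset.sum_nbij' (fun p => ⟨p.1 + p.2, p⟩) (fun q => q.2) ?_ ?_ ?_ ?_ ?_
  · rintro ⟨a, b⟩ hp
    simp only [Finset.mem_filter, Finset.mem_product, mem_range] at hp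
    simp only [Finset.mem_sigma, mem_range, Finset.HasAntidiagonal.mem_antidiagonal]
    try dsimp only
    exact ⟨hp.2, trivial⟩
  · rintro ⟨m, a, b⟩ hq
    simp only [Finset.mem_sigma, mem_range, Finset.HasAntidiagonal.mem_antidiagonal] at hq
    simp only [Finset.mem_filter, Finset.mem_product, mem_range]
    try dsimp only at hq ⊢
    omega
  · rintro ⟨a, b⟩ _
    rfl
  · rintro ⟨m, p⟩ hq
    simp only [Finset.mem_sigma, mem_range, Finset.HasAntidiagonal.mem_antidiagonal] at hq
    try dsimp only
    rw [hq.2]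
  · rintro ⟨a, b⟩ _
    rfl

-- NEW PARTS
lemma lam_eq (hI : I.card = g) {m : ℕ} (hm : m ≤ 2*g+1) :
    lamNum g e m = 4 * ((rootPoly g e I) * (rootPoly g e Iᶜ)).coeff m := by
  rw [rootPoly_mul_compl, lamNum]
  have hcard : (univ : Finset (Fin (2*g+1))).card = 2*g+1 := by simp
  have h := esymm_eq_coeff (e := e) (univ : Finset (Fin (2*g+1))) (m := 2*g+1-m)
    (by rw [hcard]; omega)
  rw [hcard] at h
  rw [h]
  have he2 : 2*g+1 - (2*g+1-m) = m := by omega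
  rw [he2]
  have hpar : (-1:ℂ)^(2*g+1-m) * (-1)^(2*g+1-m) = 1 := by
    rw [← pow_add]
    exact Even.neg_one_pow ⟨2*g+1-m, by ring⟩
  linear_combination (4 * (rootPoly g e univ).coeff m) * hpar

lemma klein_expand (hI : I.card = g) (x z : ℂ) :
    kleinPolar g e x z = ∑ a ∈ range (3*g+3), ∑ b ∈ range (3*g+3),
      (rootPoly g e I).coeff a * (rootPoly g e Iᶜ).coeff b * Phi x z (a+b) := by
  have hvan : ∀ a b,
      (rootPoly g e I).coeff a * (rootPoly g e Iᶜ).coeff b * Phi x z (a+b) ≠ 0 →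
      a + b < 2*g+2 := by
    intro a b h
    by_contra hc
    push_neg at hc
    rcases le_or_gt a g with ha | ha
    · have : (rootPoly g e Iᶜ).coeff b = 0 :=
        rootPoly_coeff_eq_zero Iᶜ (by rw [card_compl_eq hI]; omega)
      exact h (by rw [this]; ring)
    · have : (rootPoly g e I).coeff a = 0 :=
        rootPoly_coeff_eq_zero I (by rw [hI]; omega)
      exact h (by rw [this]; ring)
  rw [box_antidiag (3*g+3) (2*g+2) _ (by omega) hvan,
    show 2*g+2 = 2*(g+1) from by ring, sum_range_even_odd, kleinPolar]
  refine Finset.sum_congr rfl fun k hk => ?_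
  simp only [mem_range] at hk
  rw [lam_eq hI (by omega), lam_eq hI (by omega), Polynomial.coeff_mul,
    Polynomial.coeff_mul]
  have h1 : ∑ p ∈ Finset.HasAntidiagonal.antidiagonal (2*k),
        (rootPoly g e I).coeff p.1 * (rootPoly g e Iᶜ).coeff p.2 * Phi x z (p.1+p.2)
      = (∑ p ∈ Finset.HasAntidiagonal.antidiagonal (2*k),
          (rootPoly g e I).coeff p.1 * (rootPoly g e Iᶜ).coeff p.2) * (8*(x*z)^k) := by
    rw [Finset.sum_mul]
    refine Finset.sum_congr rfl fun p hp => ?_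
    rw [Finset.HasAntidiagonal.mem_antidiagonal] at hp
    rw [hp, Phi, if_pos (by omega), show 2*k/2 = k from by omega]
  have h2 : ∑ p ∈ Finset.HasAntidiagonal.antidiagonal (2*k+1),
        (rootPoly g e I).coeff p.1 * (rootPoly g e Iᶜ).coeff p.2 * Phi x z (p.1+p.2)
      = (∑ p ∈ Finset.HasAntidiagonal.antidiagonal (2*k+1),
          (rootPoly g e I).coeff p.1 * (rootPoly g e Iᶜ).coeff p.2)
          * (4*(x*z)^k*(x+z)) := by
    rw [Finset.sum_mul]
    refine Finset.sum_congr rfl fun p hp => ?_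
    rw [Finset.HasAntidiagonal.mem_antidiagonal] at hp
    rw [hp, Phi, if_neg (by omega), show (2*k+1)/2 = k from by omega]
  rw [h1, h2, mul_pow]
  ring

lemma prod_expand (hI : I.card = g) (x z : ℂ) :
    (∏ i ∈ I, (x - e i)) * (∏ i ∈ Iᶜ, (z - e i))
      + (∏ i ∈ I, (z - e i)) * (∏ i ∈ Iᶜ, (x - e i))
    = ∑ a ∈ range (3*g+3), ∑ b ∈ range (3*g+3),
        (rootPoly g e I).coeff a * (rootPoly g e Iᶜ).coeff b * (x^a * z^b + x^b * z^a) := by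
  have hU : ∀ y : ℂ, ∏ i ∈ I, (y - e i)
      = ∑ a ∈ range (3*g+3), (rootPoly g e I).coeff a * y^a := by
    intro y
    rw [← rootPoly_eval]
    exact Polynomial.eval_eq_sum_range' (by rw [rootPoly_natDegree, hI]; omega) y
  have hV : ∀ y : ℂ, ∏ i ∈ Iᶜ, (y - e i)
      = ∑ b ∈ range (3*g+3), (rootPoly g e Iᶜ).coeff b * y^b := by
    intro y
    rw [← rootPoly_eval]
    exact Polynomial.eval_eq_sum_range' (by rw [rootPoly_natDegree, card_compl_eq hI]; omega) y
  rw [hU x, hU z, hV x, hV z, Finset.sum_mul_sum, Finset.sum_mul_sum,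
    ← Finset.sum_add_distrib]
  refine Finset.sum_congr rfl fun a _ => ?_
  rw [← Finset.sum_add_distrib]
  refine Finset.sum_congr rfl fun b _ => ?_
  ring

lemma key (hI : I.card = g) (x z : ℂ) :
    kleinPolar g e x z
      = 4*(x-z)^2 * (∑ k ∈ Icc 1 g, ∑ j ∈ Icc 1 g, Pmat g e I k j * x^(k-1) * z^(j-1))
        + 4*((∏ i ∈ I, (x - e i)) * (∏ i ∈ Iᶜ, (z - e i))
              + (∏ i ∈ I, (z - e i)) * (∏ i ∈ Iᶜ, (x - e i))) := by
  have hPm : (∑ k ∈ Icc 1 g, ∑ j ∈ Icc 1 g, Pmat g e I k j * x^(k-1) * z^(j-1))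
      = ∑ k ∈ Icc 1 g, ∑ j ∈ Icc 1 g,
        (-∑ n ∈ Icc 1 (min k j), (n:ℂ) *
          ((rootPoly g e I).coeff (min k j - n) * (rootPoly g e Iᶜ).coeff (max k j + n) +
           (rootPoly g e I).coeff (max k j + n) * (rootPoly g e Iᶜ).coeff (min k j - n)))
          * x^(k-1) * z^(j-1) := by
    refine Finset.sum_congr rfl fun k hk => Finset.sum_congr rfl fun j hj => ?_
    rw [Pmat_eq hI hk hj]
  rw [hPm, sumL g x z (rootPoly g e I).coeff (rootPoly g e Iᶜ).coeff,
    klein_expand hI x z, prod_expand hI x z]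
  have main : ∀ a ∈ range (3*g+3), ∀ b ∈ range (3*g+3),
      (rootPoly g e I).coeff a * (rootPoly g e Iᶜ).coeff b * Phi x z (a+b)
      = -(4*(x-z)^2 * ((rootPoly g e I).coeff a * (rootPoly g e Iᶜ).coeff b * Wf g x z a b))
        + 4*((rootPoly g e I).coeff a * (rootPoly g e Iᶜ).coeff b * (x^a*z^b + x^b*z^a)) := by
    intro a _ b _
    rcases le_or_gt a g with ha | ha
    · rcases le_or_gt b (g+1) with hb | hb
      · rw [tent' g x z ha hb]; ring
      · rw [rootPoly_coeff_eq_zero Iᶜ (by rw [card_compl_eq hI]; omega)]; ring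
    · rw [rootPoly_coeff_eq_zero I (by rw [hI]; omega)]; ring
  calc ∑ a ∈ range (3*g+3), ∑ b ∈ range (3*g+3),
        (rootPoly g e I).coeff a * (rootPoly g e Iᶜ).coeff b * Phi x z (a+b)
      = ∑ a ∈ range (3*g+3), ∑ b ∈ range (3*g+3),
        (-(4*(x-z)^2 * ((rootPoly g e I).coeff a * (rootPoly g e Iᶜ).coeff b * Wf g x z a b))
        + 4*((rootPoly g e I).coeff a * (rootPoly g e Iᶜ).coeff b * (x^a*z^b + x^b*z^a))) :=
        Finset.sum_congr rfl fun a ha => Finset.sum_congr rfl fun b hb => main a ha b hb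
    _ = _ := by
        simp only [Finset.sum_add_distrib]
        congr 1
        · simp only [Finset.sum_neg_distrib]
          rw [mul_neg, neg_inj, Finset.mul_sum]
          exact Finset.sum_congr rfl fun a _ => by rw [Finset.mul_sum]
        · rw [Finset.mul_sum]
          exact Finset.sum_congr rfl fun a _ => by rw [Finset.mul_sum]


theorem klein_formula_at_half_period (g : ℕ) (hg : 1 ≤ g)
    (e : Fin (2 * g + 1) → ℂ) (he : Function.Injective e)
    (I : Finset (Fin (2 * g + 1))) (hI : I.card = g)
    (r s : Fin (2 * g + 1)) (hr : r ∈ I) (hs : s ∈ I) (hrs : r ≠ s) :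
    ∑ i ∈ Finset.Icc 1 g, ∑ j ∈ Finset.Icc 1 g,
        Pmat g e I i j * (e r) ^ (i - 1) * (e s) ^ (j - 1) =
      kleinPolar g e (e r) (e s) / (4 * (e r - e s) ^ 2) := by
  have hk := key (e := e) hI (e r) (e s)
  have hU1 : ∏ i ∈ I, (e r - e i) = 0 := Finset.prod_eq_zero hr (by simp)
  have hU2 : ∏ i ∈ I, (e s - e i) = 0 := Finset.prod_eq_zero hs (by simp)
  rw [hU1, hU2, zero_mul, zero_mul, add_zero, mul_zero, add_zero] at hk
  rw [hk]
  have hne : (4 : ℂ) * (e r - e s)^2 ≠ 0 := by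
    apply mul_ne_zero (by norm_num)
    exact pow_ne_zero 2 (sub_ne_zero.mpr (fun hh => hrs (he hh)))
  rw [mul_div_cancel_left₀ _ hne]
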